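/- For all t > 0, the function x(t) = t/(t² + 1) is differentiable with x'(t) = (1 − t²)/(t² + 1)², and with z(t) = (2t² + 1)^{3/2}/(t(t² + 1)) one has x'(t)² + z'(t)² = (t² − 1)²/(t⁴(t² + 1)²). -/

import Mathlib

/-- For all `t > 0`, `x(t) = t/(t² + 1)` is differentiable with
`x'(t) = (1 − t²)/(t² + 1)²`, and with `z(t) = (2t² + 1)^{3/2}/(t(t² + 1))` one has
`x'(t)² + z'(t)² = (t² − 1)²/(t⁴(t² + 1)²)`. -/
theorem stmt_14 (t : ℝ) (ht : 0 < t) :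
    HasDerivAt (fun t : ℝ => t / (t ^ 2 + 1)) ((1 - t ^ 2) / (t ^ 2 + 1) ^ 2) t ∧
    (deriv (fun t : ℝ => t / (t ^ 2 + 1)) t) ^ 2 +
      (deriv (fun t : ℝ => (2 * t ^ 2 + 1) ^ ((3 : ℝ) / 2) / (t * (t ^ 2 + 1))) t) ^ 2 =
      (t ^ 2 - 1) ^ 2 / (t ^ 4 * (t ^ 2 + 1) ^ 2) := by
  have h1 : (t : ℝ) ^ 2 + 1 ≠ 0 := by positivity
  have ha : (0:ℝ) < 2 * t ^ 2 + 1 := by positivity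
  have hx : HasDerivAt (fun t : ℝ => t / (t ^ 2 + 1))
      ((1 - t ^ 2) / (t ^ 2 + 1) ^ 2) t := by
    have h := (hasDerivAt_id' t).div ((hasDerivAt_pow 2 t).add_const 1) h1
    refine h.congr_deriv ?_
    field_simp
    ring
  refine ⟨hx, ?_⟩
  set s : ℝ := (2 * t ^ 2 + 1) ^ ((1 : ℝ) / 2) with hs
  have hs2 : s ^ 2 = 2 * t ^ 2 + 1 := by
    rw [hs, ← Real.rpow_natCast _ 2, ← Real.rpow_mul ha.le]
    norm_num
  have hbase : HasDerivAt (fun t : ℝ => 2 * t ^ 2 + 1) (2 * (2 * t)) t := by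
    simpa using ((hasDerivAt_pow 2 t).const_mul 2).add_const 1
  have hnum : HasDerivAt (fun t : ℝ => (2 * t ^ 2 + 1) ^ ((3 : ℝ) / 2))
      (2 * (2 * t) * ((3 : ℝ) / 2) * (2 * t ^ 2 + 1) ^ ((3 : ℝ) / 2 - 1)) t :=
    hbase.rpow_const (Or.inl (ne_of_gt ha))
  have hpow32 : (2 * t ^ 2 + 1) ^ ((3 : ℝ) / 2) = (2 * t ^ 2 + 1) * s := by
    rw [hs, ← Real.rpow_one_add' ha.le (by norm_num)]
    norm_num
  have hpow12 : (2 * t ^ 2 + 1) ^ ((3 : ℝ) / 2 - 1) = s := by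
    norm_num [hs]
  have hden : HasDerivAt (fun t : ℝ => t * (t ^ 2 + 1)) (1 * (t ^ 2 + 1) + t * (2 * t)) t := by
    exact ((hasDerivAt_id' t).mul ((hasDerivAt_pow 2 t).add_const 1)).congr_deriv (by simp)
  have hden0 : t * (t ^ 2 + 1) ≠ 0 := by positivity
  have hz : HasDerivAt (fun t : ℝ => (2 * t ^ 2 + 1) ^ ((3 : ℝ) / 2) / (t * (t ^ 2 + 1)))
      (s * (t ^ 2 - 1) / (t ^ 2 * (t ^ 2 + 1) ^ 2)) t := by
    have h := hnum.div hden hden0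
    refine h.congr_deriv ?_
    rw [hpow32, hpow12]
    have ht2 : t ^ 2 ≠ 0 := by positivity
    field_simp
    ring
  rw [hx.deriv, hz.deriv]
  have ht2 : t ^ 2 ≠ 0 := by positivity
  rw [div_pow, div_pow, mul_pow, hs2]
  field_simp
  ring
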